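/- For r ≥ 4, adim_2(K_r □ K_r) = 2, realized by S = {(u_1,v_1),(u_2,v_2)}, whose equal-distance relation has the class {(u_1,v_2),(u_2,v_1)} of size 2 as a minimum class. -/

import Mathlib

open SimpleGraph

/-- Two vertices have the same distances to every vertex of `S`. -/
def sameDists {V : Type*} (G : SimpleGraph V) (S : Set V) (x y : V) : Prop :=
  ∀ z ∈ S, G.dist x z = G.dist y z

/-- The equivalence class (outside `S`) of `x` under the equal-distance relation `R_S`. -/
def cls {V : Type*} (G : SimpleGraph V) (S : Set V) (x : V) : Set V :=
  {y | y ∉ S ∧ sameDists G S x y}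

/-- `S` is a `k`-antiresolving set: `S` is nonempty, does not cover `V`, and the minimum
size of an equivalence class of `R_S` on `V ∖ S` equals `k`. -/
def IsKARS {V : Type*} (G : SimpleGraph V) (k : ℕ) (S : Set V) : Prop :=
  S.Nonempty ∧ Sᶜ.Nonempty ∧
    (∀ x ∉ S, k ≤ (cls G S x).ncard) ∧ ∃ x ∉ S, (cls G S x).ncard = k

/-- The `k`-metric antidimension: the smallest cardinality of a `k`-antiresolving set,
`⊤` (i.e. `+∞`) if none exists. -/
noncomputable def adim {V : Type*} (G : SimpleGraph V) (k : ℕ) : ℕ∞ :=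
  sInf ((fun S => (S.ncard : ℕ∞)) '' {S : Set V | IsKARS G k S})

namespace Stmt18Aux

variable {r : ℕ}

def D (x y : Fin r × Fin r) : ℕ :=
  (if x.1 = y.1 then 0 else 1) + (if x.2 = y.2 then 0 else 1)

lemma dist_eq (hr : 4 ≤ r) (x y : Fin r × Fin r) :
    ((⊤ : SimpleGraph (Fin r)).boxProd ⊤).dist x y = D x y := by
  haveI : Nonempty (Fin r) := ⟨⟨0, by linarith⟩⟩
  have hconn : ((⊤ : SimpleGraph (Fin r)).boxProd ⊤).Connected :=
    (SimpleGraph.connected_boxProd).2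
      ⟨(connected_top : (⊤ : SimpleGraph (Fin r)).Connected),
        (connected_top : (⊤ : SimpleGraph (Fin r)).Connected)⟩
  obtain ⟨a, b⟩ := x; obtain ⟨c, d⟩ := y
  by_cases h1 : a = c <;> by_cases h2 : b = d
  · subst h1; subst h2; simp [D, SimpleGraph.dist_self]
  · subst h1
    rw [SimpleGraph.dist_eq_one_iff_adj.mpr (by simp [SimpleGraph.boxProd_adj, h2])]
    simp [D, h2]
  · subst h2
    rw [SimpleGraph.dist_eq_one_iff_adj.mpr (by simp [SimpleGraph.boxProd_adj, h1])]
    simp [D, h1]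
  · have hadj1 : ((⊤ : SimpleGraph (Fin r)).boxProd ⊤).Adj (a, b) (c, b) := by
      simp [SimpleGraph.boxProd_adj, h1]
    have hadj2 : ((⊤ : SimpleGraph (Fin r)).boxProd ⊤).Adj (c, b) (c, d) := by
      simp [SimpleGraph.boxProd_adj, h2]
    have hle := SimpleGraph.dist_le (SimpleGraph.Walk.cons hadj1 hadj2.toWalk)
    simp only [SimpleGraph.Walk.length_cons, SimpleGraph.Adj.toWalk,
      SimpleGraph.Walk.length_cons, SimpleGraph.Walk.length_nil] at hle
    have h0 : ((⊤ : SimpleGraph (Fin r)).boxProd ⊤).dist (a, b) (c, d) ≠ 0 := by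
      rw [Ne, hconn.dist_eq_zero_iff]
      simp [Prod.ext_iff, h1]
    have hone : ((⊤ : SimpleGraph (Fin r)).boxProd ⊤).dist (a, b) (c, d) ≠ 1 := by
      rw [Ne, SimpleGraph.dist_eq_one_iff_adj]
      simp [SimpleGraph.boxProd_adj, h1, h2]
    simp only [D, if_neg h1, if_neg h2]
    omega

lemma three_distinct (hr : 4 ≤ r) (t : Fin r) :
    ∃ a b c : Fin r, a ≠ b ∧ a ≠ c ∧ b ≠ c ∧ a ≠ t ∧ b ≠ t ∧ c ≠ t := by
  by_cases h0 : (t : ℕ) = 0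
  · refine ⟨⟨1, by linarith⟩, ⟨2, by linarith⟩, ⟨3, by linarith⟩, ?_, ?_, ?_, ?_, ?_, ?_⟩ <;>
      simp [Fin.ext_iff] <;> omega
  by_cases h1 : (t : ℕ) = 1
  · refine ⟨⟨0, by linarith⟩, ⟨2, by linarith⟩, ⟨3, by linarith⟩, ?_, ?_, ?_, ?_, ?_, ?_⟩ <;>
      simp [Fin.ext_iff] <;> omega
  by_cases h2 : (t : ℕ) = 2
  · refine ⟨⟨0, by linarith⟩, ⟨1, by linarith⟩, ⟨3, by linarith⟩, ?_, ?_, ?_, ?_, ?_, ?_⟩ <;>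
      simp [Fin.ext_iff] <;> omega
  · refine ⟨⟨0, by linarith⟩, ⟨1, by linarith⟩, ⟨2, by linarith⟩, ?_, ?_, ?_, ?_, ?_, ?_⟩ <;>
      simp [Fin.ext_iff] <;> omega

lemma mem_cls_singleton (hr : 4 ≤ r) (s x y : Fin r × Fin r) :
    y ∈ cls ((⊤ : SimpleGraph (Fin r)).boxProd ⊤) {s} x ↔
      y ≠ s ∧ D x s = D y s := by
  simp [cls, sameDists, dist_eq hr]

lemma singleton_cls_ncard_ne (hr : 4 ≤ r) (s x : Fin r × Fin r)
    (hx : x ∉ ({s} : Set (Fin r × Fin r))) :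
    (cls ((⊤ : SimpleGraph (Fin r)).boxProd ⊤) {s} x).ncard ≠ 2 := by
  obtain ⟨a, b⟩ := x; obtain ⟨s1, s2⟩ := s
  have hx' : ¬(a = s1 ∧ b = s2) := by simpa [Prod.ext_iff] using hx
  intro hcard
  obtain ⟨u, v, huv, hset⟩ := Set.ncard_eq_two.mp hcard
  by_cases hb : b = s2
  · subst hb
    have ha : a ≠ s1 := fun h => hx' ⟨h, rfl⟩
    obtain ⟨t1, t2, t3, h12, h13, h23, ht1, ht2, ht3⟩ := three_distinct hr s1
    have m1 : (t1, b) ∈ cls ((⊤ : SimpleGraph (Fin r)).boxProd ⊤) {(s1, b)} (a, b) :=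
      (mem_cls_singleton hr _ _ _).2 ⟨by simp [Prod.ext_iff, ht1], by simp [D, ht1, ha]⟩
    have m2 : (t2, b) ∈ cls ((⊤ : SimpleGraph (Fin r)).boxProd ⊤) {(s1, b)} (a, b) :=
      (mem_cls_singleton hr _ _ _).2 ⟨by simp [Prod.ext_iff, ht2], by simp [D, ht2, ha]⟩
    have m3 : (t3, b) ∈ cls ((⊤ : SimpleGraph (Fin r)).boxProd ⊤) {(s1, b)} (a, b) :=
      (mem_cls_singleton hr _ _ _).2 ⟨by simp [Prod.ext_iff, ht3], by simp [D, ht3, ha]⟩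
    rw [hset] at m1 m2 m3
    have ne12 : (t1, b) ≠ (t2, b) := by simp [Prod.ext_iff, h12]
    have ne13 : (t1, b) ≠ (t3, b) := by simp [Prod.ext_iff, h13]
    have ne23 : (t2, b) ≠ (t3, b) := by simp [Prod.ext_iff, h23]
    simp only [Set.mem_insert_iff, Set.mem_singleton_iff] at m1 m2 m3
    rcases m1 with e1 | e1 <;> rcases m2 with e2 | e2 <;> rcases m3 with e3 | e3 <;>
      first
        | exact ne12 (e1.trans e2.symm)
        | exact ne13 (e1.trans e3.symm)
        | exact ne23 (e2.trans e3.symm)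
  · obtain ⟨t1, t2, t3, h12, h13, h23, ht1, ht2, ht3⟩ := three_distinct hr s2
    have m1 : (a, t1) ∈ cls ((⊤ : SimpleGraph (Fin r)).boxProd ⊤) {(s1, s2)} (a, b) :=
      (mem_cls_singleton hr _ _ _).2 ⟨by simp [Prod.ext_iff, ht1], by simp [D, ht1, hb]⟩
    have m2 : (a, t2) ∈ cls ((⊤ : SimpleGraph (Fin r)).boxProd ⊤) {(s1, s2)} (a, b) :=
      (mem_cls_singleton hr _ _ _).2 ⟨by simp [Prod.ext_iff, ht2], by simp [D, ht2, hb]⟩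
    have m3 : (a, t3) ∈ cls ((⊤ : SimpleGraph (Fin r)).boxProd ⊤) {(s1, s2)} (a, b) :=
      (mem_cls_singleton hr _ _ _).2 ⟨by simp [Prod.ext_iff, ht3], by simp [D, ht3, hb]⟩
    rw [hset] at m1 m2 m3
    have ne12 : (a, t1) ≠ (a, t2) := by simp [Prod.ext_iff, h12]
    have ne13 : (a, t1) ≠ (a, t3) := by simp [Prod.ext_iff, h13]
    have ne23 : (a, t2) ≠ (a, t3) := by simp [Prod.ext_iff, h23]
    simp only [Set.mem_insert_iff, Set.mem_singleton_iff] at m1 m2 m3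
    rcases m1 with e1 | e1 <;> rcases m2 with e2 | e2 <;> rcases m3 with e3 | e3 <;>
      first
        | exact ne12 (e1.trans e2.symm)
        | exact ne13 (e1.trans e3.symm)
        | exact ne23 (e2.trans e3.symm)

lemma mem_cls_pair (hr : 4 ≤ r) (x y : Fin r × Fin r) :
    y ∈ cls ((⊤ : SimpleGraph (Fin r)).boxProd ⊤)
      ({(⟨0, by linarith⟩, ⟨0, by linarith⟩), (⟨1, by linarith⟩, ⟨1, by linarith⟩)} :
        Set (Fin r × Fin r)) x ↔
      (¬(y = (⟨0, by linarith⟩, ⟨0, by linarith⟩) ∨ y = (⟨1, by linarith⟩, ⟨1, by linarith⟩))) ∧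
      D x (⟨0, by linarith⟩, ⟨0, by linarith⟩) = D y (⟨0, by linarith⟩, ⟨0, by linarith⟩) ∧
      D x (⟨1, by linarith⟩, ⟨1, by linarith⟩) = D y (⟨1, by linarith⟩, ⟨1, by linarith⟩) := by
  simp [cls, sameDists, dist_eq hr, Set.mem_insert_iff]

lemma cls_pair_eq (hr : 4 ≤ r) :
    cls ((⊤ : SimpleGraph (Fin r)).boxProd ⊤)
      ({(⟨0, by linarith⟩, ⟨0, by linarith⟩), (⟨1, by linarith⟩, ⟨1, by linarith⟩)} :
        Set (Fin r × Fin r))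
      ((⟨0, by linarith⟩, ⟨1, by linarith⟩) : Fin r × Fin r) =
      ({(⟨0, by linarith⟩, ⟨1, by linarith⟩), (⟨1, by linarith⟩, ⟨0, by linarith⟩)} :
        Set (Fin r × Fin r)) := by
  ext ⟨a, b⟩
  rw [Set.mem_insert_iff, Set.mem_singleton_iff, mem_cls_pair hr]
  simp only [D, Prod.mk.injEq, Prod.ext_iff, Fin.ext_iff, Fin.val_mk]
  split_ifs <;> first | exact absurd trivial ‹¬True› | exact False.elim ‹False› | omega

end Stmt18Aux

open Stmt18Aux

/-- For `r ≥ 4`, `adim_2(K_r □ K_r) = 2`, realized by `S = {(u_1,v_1), (u_2,v_2)}`,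
whose equal-distance relation has the class `{(u_1,v_2), (u_2,v_1)}` of size 2 as a
minimum class. -/
theorem stmt18 (r : ℕ) (hr : 4 ≤ r) :
    adim ((⊤ : SimpleGraph (Fin r)).boxProd (⊤ : SimpleGraph (Fin r))) 2 = 2 ∧
    IsKARS ((⊤ : SimpleGraph (Fin r)).boxProd (⊤ : SimpleGraph (Fin r))) 2
      ({(⟨0, by omega⟩, ⟨0, by omega⟩), (⟨1, by omega⟩, ⟨1, by omega⟩)} :
        Set (Fin r × Fin r)) ∧
    cls ((⊤ : SimpleGraph (Fin r)).boxProd (⊤ : SimpleGraph (Fin r)))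
      ({(⟨0, by omega⟩, ⟨0, by omega⟩), (⟨1, by omega⟩, ⟨1, by omega⟩)} :
        Set (Fin r × Fin r)) ((⟨0, by omega⟩, ⟨1, by omega⟩)) =
      {(⟨0, by omega⟩, ⟨1, by omega⟩), (⟨1, by omega⟩, ⟨0, by omega⟩)} := by
  set G := (⊤ : SimpleGraph (Fin r)).boxProd (⊤ : SimpleGraph (Fin r)) with hG
  set S : Set (Fin r × Fin r) :=
    {(⟨0, by omega⟩, ⟨0, by omega⟩), (⟨1, by omega⟩, ⟨1, by omega⟩)} with hS
  have h3 := cls_pair_eq hr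
  have hpairne : ((⟨0, by omega⟩ : Fin r), (⟨1, by omega⟩ : Fin r)) ≠
      ((⟨1, by omega⟩ : Fin r), (⟨0, by omega⟩ : Fin r)) := by
    simp [Prod.ext_iff, Fin.ext_iff]
  have hS12 : ((⟨0, by omega⟩ : Fin r), (⟨0, by omega⟩ : Fin r)) ≠
      ((⟨1, by omega⟩ : Fin r), (⟨1, by omega⟩ : Fin r)) := by
    simp [Prod.ext_iff, Fin.ext_iff]
  have hx01 : ((⟨0, by omega⟩ : Fin r), (⟨1, by omega⟩ : Fin r)) ∉ S := by
    simp [hS, Prod.ext_iff, Fin.ext_iff]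
  have hcard2 : (cls G S ((⟨0, by omega⟩, ⟨1, by omega⟩))).ncard = 2 := by
    rw [h3]; exact Set.ncard_pair hpairne
  have hlow : ∀ x ∉ S, 2 ≤ (cls G S x).ncard := by
    rintro ⟨a, b⟩ hxS
    have hxc : (a, b) ∈ cls G S (a, b) := ⟨hxS, fun z _ => rfl⟩
    have key : ∃ p, p ∈ cls G S (a, b) ∧ p ≠ (a, b) := by
      by_cases hab : a = b
      · subst hab
        have haS : ¬(a = ⟨0, by omega⟩ ∨ a = ⟨1, by omega⟩) := by
          intro h
          apply hxS
          rcases h with h | h <;> simp [hS, h]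
        push_neg at haS
        obtain ⟨ha0, ha1⟩ := haS
        set c : Fin r := if a = (⟨2, by omega⟩ : Fin r) then ⟨3, by omega⟩ else ⟨2, by omega⟩
          with hc
        have hca : c ≠ a ∧ c ≠ (⟨0, by omega⟩ : Fin r) ∧ c ≠ (⟨1, by omega⟩ : Fin r) := by
          rw [hc]
          split_ifs with h
          · refine ⟨?_, ?_, ?_⟩ <;> simp [h, Fin.ext_iff]
          · exact ⟨fun hh => h hh.symm, by simp [Fin.ext_iff], by simp [Fin.ext_iff]⟩
        obtain ⟨hca1, hc0, hc1⟩ := hca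
        refine ⟨(a, c), ⟨?_, ?_⟩, ?_⟩
        · simp [hS, Prod.ext_iff, ha0, ha1]
        · intro z hz
          rw [hG, dist_eq hr, dist_eq hr]
          rcases hz with hz | hz <;> subst hz <;>
            simp [D, ha0, ha1, hc0, hc1]
        · simp [Prod.ext_iff, hca1]
      · refine ⟨(b, a), ⟨?_, ?_⟩, ?_⟩
        · intro h
          simp only [hS, Set.mem_insert_iff, Set.mem_singleton_iff, Prod.mk.injEq] at h
          rcases h with ⟨h1, h2⟩ | ⟨h1, h2⟩ <;> exact hab (h2.trans h1.symm)
        · intro z hz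
          rw [hG, dist_eq hr, dist_eq hr]
          rcases hz with hz | hz <;> subst hz <;>
            exact add_comm _ _
        · intro h
          rw [Prod.mk.injEq] at h
          exact hab h.2
    obtain ⟨p, hp, hpne⟩ := key
    have := (Set.one_lt_ncard (Set.toFinite _)).2 ⟨p, hp, (a, b), hxc, hpne⟩
    omega
  have hKARS : IsKARS G 2 S :=
    ⟨⟨_, Set.mem_insert _ _⟩, ⟨(⟨0, by omega⟩, ⟨1, by omega⟩), hx01⟩, hlow,
      ⟨(⟨0, by omega⟩, ⟨1, by omega⟩), hx01, hcard2⟩⟩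
  refine ⟨?_, hKARS, h3⟩
  apply le_antisymm
  · apply sInf_le
    refine ⟨S, hKARS, ?_⟩
    simp only [hS]
    rw [Set.ncard_pair hS12]
    norm_num
  · apply le_sInf
    rintro b ⟨S', hS', rfl⟩
    have h2 : 2 ≤ S'.ncard := by
      by_contra hlt
      push_neg at hlt
      have hpos : 0 < S'.ncard := (Set.ncard_pos (Set.toFinite _)).2 hS'.1
      have hone : S'.ncard = 1 := by omega
      obtain ⟨s, rfl⟩ := Set.ncard_eq_one.mp hone
      obtain ⟨x, hx, hcx⟩ := hS'.2.2.2
      exact singleton_cls_ncard_ne hr s x hx hcx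
    show (2 : ℕ∞) ≤ (S'.ncard : ℕ∞)
    exact_mod_cast h2
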